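/- Let N ≥ 2. Then ∫₀¹ (√(N−1)/N) / (1 − 4(1 − 1/N) s (1 − s)) ds = arctan(√(N−1)). Consequently, the total length L = ∫₀¹ ‖φ'(s)‖ ds of the ground-state eigenpath of the adiabatic Grover Hamiltonian equals arctan(√(N−1)); in particular L < π/2 for all N, so the path length is bounded independently of N (and of the minimum gap 1/√N). -/

import Mathlib

/-- For `N ≥ 2`,
`∫₀¹ (√(N−1)/N) / (1 − 4(1 − 1/N)s(1 − s)) ds = arctan √(N−1)`.
Consequently the total length `L` of the ground-state eigenpath of the adiabatic
Grover Hamiltonian equals `arctan √(N−1)`; in particular `L < π/2` for all `N`, so the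
path length is bounded independently of `N` (and of the minimum gap `1/√N`). -/
theorem grover_eigenpath_length
    (N : ℕ) (hN : 2 ≤ N) :
    (∫ s in (0 : ℝ)..1,
        (Real.sqrt ((N : ℝ) - 1) / (N : ℝ)) / (1 - 4 * (1 - 1 / (N : ℝ)) * s * (1 - s)))
      = Real.arctan (Real.sqrt ((N : ℝ) - 1)) ∧
      Real.arctan (Real.sqrt ((N : ℝ) - 1)) < Real.pi / 2 := by
  have hN1 : (1:ℝ) ≤ (N:ℝ) := by exact_mod_cast Nat.one_le_of_lt hN
  have hNpos : (0:ℝ) < (N:ℝ) := lt_of_lt_of_le one_pos hN1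
  have hNne : (N:ℝ) ≠ 0 := ne_of_gt hNpos
  set c : ℝ := Real.sqrt ((N:ℝ) - 1) with hc
  have hc2 : c ^ 2 = (N:ℝ) - 1 := Real.sq_sqrt (by linarith)
  -- rewrite integrand
  have hkey : ∀ s : ℝ, (c / (N:ℝ)) / (1 - 4 * (1 - 1 / (N:ℝ)) * s * (1 - s))
      = c / (1 + ((N:ℝ) - 1) * (2*s - 1)^2) := by
    intro s
    have hden : 1 - 4 * (1 - 1 / (N:ℝ)) * s * (1 - s)
        = (1 + ((N:ℝ) - 1) * (2*s - 1)^2) / N := by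
      field_simp
      ring
    have hpos : (0:ℝ) < 1 + ((N:ℝ) - 1) * (2*s - 1)^2 := by
      nlinarith [sq_nonneg (2*s - 1)]
    rw [hden]
    field_simp
  have hderiv : ∀ s : ℝ, HasDerivAt (fun t => (1/2) * Real.arctan (c * (2*t - 1)))
      (c / (1 + ((N:ℝ) - 1) * (2*s - 1)^2)) s := by
    intro s
    have h1 : HasDerivAt (fun t : ℝ => c * (2*t - 1)) (c * 2) s := by
      have : HasDerivAt (fun t : ℝ => 2*t - 1) 2 s := by
        simpa using ((hasDerivAt_id s).const_mul 2).sub_const 1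
      simpa using this.const_mul c
    have h2 := (Real.hasDerivAt_arctan (c * (2*s - 1))).comp s h1
    have h3 := h2.const_mul (1/2 : ℝ)
    convert h3 using 1
    case e'_4 => rfl
    case e'_5 => rfl
    case e'_8 => rfl
    have : (c * (2*s - 1))^2 = ((N:ℝ) - 1) * (2*s - 1)^2 := by
      rw [mul_pow, hc2]
    have hpos : (0:ℝ) < 1 + ((N:ℝ) - 1) * (2*s - 1)^2 := by
      nlinarith [sq_nonneg (2*s - 1)]
    rw [this]
    field_simp
  have hcont : Continuous (fun s : ℝ => c / (1 + ((N:ℝ) - 1) * (2*s - 1)^2)) := by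
    apply continuous_const.div
    · continuity
    · intro s
      have : (0:ℝ) < 1 + ((N:ℝ) - 1) * (2*s - 1)^2 := by
        nlinarith [sq_nonneg (2*s - 1)]
      exact ne_of_gt this
  have hint : (∫ s in (0:ℝ)..1, c / (1 + ((N:ℝ) - 1) * (2*s - 1)^2))
      = Real.arctan c := by
    rw [intervalIntegral.integral_eq_sub_of_hasDerivAt
      (fun s _ => hderiv s) (hcont.intervalIntegrable 0 1)]
    simp [Real.arctan_neg]
    ring
  constructor
  · rw [intervalIntegral.integral_congr (fun s _ => hkey s)]
    exact hint
  · exact Real.arctan_lt_pi_div_two c
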